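/- Finiteness of zeros away from the real axis (core of Corollary 4.5). For every δ > 0, the set {λ ∈ ℂ : Φ(λ) = 0 and |Im λ| ≥ δ} is finite. -/

import Mathlib

open MeasureTheory Real Complex Filter Set Bornology
open scoped FourierTransform Topology ENNReal

/-- `Φ(λ) = 1 − e^{2πiλ} + i ∫₀^{2π} e^{iλt} K(t) dt`. -/
noncomputable def Phi (K : ℝ → ℂ) (lam : ℂ) : ℂ :=
  1 - Complex.exp (2 * Real.pi * Complex.I * lam)
    + Complex.I * ∫ t in (0:ℝ)..(2 * Real.pi), Complex.exp (Complex.I * lam * t) * K t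

namespace PhiAux

noncomputable def mu2 : Measure ℝ := volume.restrict (Set.Ioc 0 (2 * Real.pi))

lemma mem_Ioc_ae : ∀ᵐ t ∂mu2, t ∈ Set.Ioc (0:ℝ) (2 * Real.pi) :=
  ae_restrict_mem measurableSet_Ioc

lemma re_helper (lam : ℂ) (t : ℝ) : (Complex.I * lam * t).re = -(lam.im * t) := by
  simp [Complex.mul_re]

lemma norm_cexp (lam : ℂ) (t : ℝ) :
    ‖Complex.exp (Complex.I * lam * t)‖ = Real.exp (-(lam.im * t)) := by
  rw [Complex.norm_exp, re_helper]

lemma norm_cexp_twopi (lam : ℂ) :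
    ‖Complex.exp (2 * Real.pi * Complex.I * lam)‖ = Real.exp (-(2 * Real.pi * lam.im)) := by
  rw [Complex.norm_exp]
  congr 1
  simp [Complex.mul_re, Complex.mul_im]

lemma phi_eq (K : ℝ → ℂ) (lam : ℂ) :
    Phi K lam = 1 - Complex.exp (2 * Real.pi * Complex.I * lam)
      + Complex.I * ∫ t, Complex.exp (Complex.I * lam * t) * K t ∂mu2 := by
  rw [Phi, intervalIntegral.integral_of_le (by positivity)]
  rfl

variable {K : ℝ → ℂ}

/-- generic integrability helper -/
lemma integrable_aux (hK : Integrable K mu2) {φ : ℝ → ℝ} (hφ : Continuous φ)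
    {C : ℝ} (hC : ∀ t ∈ Set.Ioc (0:ℝ) (2 * Real.pi), |φ t| ≤ C) :
    Integrable (fun t => φ t * ‖K t‖) mu2 := by
  refine (hK.norm.const_mul C).mono' (hφ.aestronglyMeasurable.mul hK.norm.aestronglyMeasurable) ?_
  filter_upwards [mem_Ioc_ae] with t ht
  rw [Real.norm_eq_abs, abs_mul, abs_norm]
  exact mul_le_mul_of_nonneg_right (hC t ht) (norm_nonneg _)

lemma integrable_cexp_mul (hK : Integrable K mu2) (lam : ℂ) :
    Integrable (fun t : ℝ => Complex.exp (Complex.I * lam * t) * K t) mu2 := by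
  have hm : AEStronglyMeasurable (fun t : ℝ => Complex.exp (Complex.I * lam * t)) mu2 :=
    (Complex.continuous_exp.comp (by fun_prop)).aestronglyMeasurable
  refine (hK.norm.const_mul (Real.exp (|lam.im| * (2 * Real.pi)))).mono' (hm.mul hK.1) ?_
  filter_upwards [mem_Ioc_ae] with t ht
  rw [norm_mul, norm_cexp]
  have h1 : -(lam.im * t) ≤ |lam.im| * (2 * Real.pi) := by
    calc -(lam.im * t) ≤ |lam.im * t| := neg_le_abs _
    _ = |lam.im| * |t| := abs_mul _ _
    _ ≤ |lam.im| * (2 * Real.pi) := by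
        have : |t| ≤ 2 * Real.pi := abs_le.2 ⟨by linarith [ht.1, Real.pi_pos], ht.2⟩
        exact mul_le_mul_of_nonneg_left this (abs_nonneg _)
  exact mul_le_mul_of_nonneg_right (Real.exp_le_exp.2 h1) (norm_nonneg _)

lemma differentiable_phi (hK : Integrable K mu2) : Differentiable ℂ (Phi K) := by
  have hJ : Differentiable ℂ (fun lam : ℂ => ∫ t, Complex.exp (Complex.I * lam * t) * K t ∂mu2) := by
    intro lam0
    have key := hasDerivAt_integral_of_dominated_loc_of_deriv_le (μ := mu2) (𝕜 := ℂ)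
      (F := fun lam t => Complex.exp (Complex.I * lam * t) * K t)
      (F' := fun lam t => (Complex.I * t) * (Complex.exp (Complex.I * lam * t) * K t))
      (x₀ := lam0) (s := Metric.ball lam0 1)
      (bound := fun t => (2 * Real.pi) * Real.exp ((‖lam0‖ + 1) * (2 * Real.pi)) * ‖K t‖)
      (Metric.ball_mem_nhds lam0 one_pos)
      (Filter.Eventually.of_forall fun lam => (integrable_cexp_mul hK lam).1)
      (integrable_cexp_mul hK lam0)
      ?_ ?_ ?_ ?_
    · exact key.2.differentiableAt
    · have hc : Continuous fun t : ℝ => Complex.I * (t:ℂ) * Complex.exp (Complex.I * lam0 * t) := by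
        fun_prop
      exact (hc.aestronglyMeasurable.mul hK.1).congr
        (Filter.Eventually.of_forall fun t => by simp only [Pi.mul_apply]; ring)
    · filter_upwards [mem_Ioc_ae] with t ht lam hlam
      have him : |lam.im| ≤ ‖lam0‖ + 1 := by
        have h1 : |lam.im - lam0.im| ≤ ‖lam - lam0‖ := by
          simpa using Complex.abs_im_le_norm (lam - lam0)
        have h2 : ‖lam - lam0‖ < 1 := by simpa [Metric.mem_ball, dist_eq_norm] using hlam
        have h3 : |lam0.im| ≤ ‖lam0‖ := Complex.abs_im_le_norm lam0
        have h4 : |lam.im| ≤ |lam.im - lam0.im| + |lam0.im| := by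
          calc |lam.im| = |(lam.im - lam0.im) + lam0.im| := by ring_nf
            _ ≤ _ := abs_add_le _ _
        linarith
      have hexp : Real.exp (-(lam.im * t)) ≤ Real.exp ((‖lam0‖ + 1) * (2 * Real.pi)) := by
        apply Real.exp_le_exp.2
        calc -(lam.im * t) ≤ |lam.im| * |t| := by rw [← abs_mul]; exact neg_le_abs _
          _ ≤ (‖lam0‖ + 1) * (2 * Real.pi) := by
              apply mul_le_mul him (abs_le.2 ⟨by linarith [ht.1, Real.pi_pos], ht.2⟩) (abs_nonneg _)
              positivity
      have habt : |t| ≤ 2 * Real.pi := abs_le.2 ⟨by linarith [ht.1, Real.pi_pos], ht.2⟩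
      simp only [norm_mul, norm_cexp, Complex.norm_I, Complex.norm_real, Real.norm_eq_abs,
        one_mul]
      calc |t| * (Real.exp (-(lam.im * t)) * ‖K t‖)
          ≤ (2 * Real.pi) * (Real.exp ((‖lam0‖ + 1) * (2 * Real.pi)) * ‖K t‖) := by
            apply mul_le_mul habt (mul_le_mul_of_nonneg_right hexp (norm_nonneg _))
              (by positivity) (by positivity)
        _ = 2 * Real.pi * Real.exp ((‖lam0‖ + 1) * (2 * Real.pi)) * ‖K t‖ := by ring
    · exact hK.norm.const_mul (2 * Real.pi * Real.exp ((‖lam0‖ + 1) * (2 * Real.pi)))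
    · filter_upwards with t lam _
      have e : ∀ y : ℂ, Complex.I * y * t = (Complex.I * (t:ℂ)) * y := fun y => by ring
      simp_rw [e]
      have h := (((hasDerivAt_id lam).const_mul (Complex.I * (t:ℂ))).cexp).mul_const (K t)
      convert h using 1
      · rfl
      · rfl
      simp only [id_eq]
      ring
  have hfun : Phi K = fun lam => 1 - Complex.exp (2 * Real.pi * Complex.I * lam)
      + Complex.I * ∫ t, Complex.exp (Complex.I * lam * t) * K t ∂mu2 := funext (phi_eq K)
  rw [hfun]
  apply Differentiable.add
  · apply (differentiable_const (1:ℂ)).sub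
    exact (Complex.differentiable_exp.comp ((differentiable_id).const_mul _))
  · exact hJ.const_mul _


lemma exp_seq_tendsto {t : ℝ} (ht : 0 < t) :
    Tendsto (fun n : ℕ => Real.exp (-((n:ℝ) * t))) atTop (𝓝 0) := by
  have e : ∀ n : ℕ, Real.exp (-((n:ℝ) * t)) = Real.exp (-t) ^ n := by
    intro n; rw [← Real.exp_nat_mul]; ring_nf
  simp_rw [e]
  exact tendsto_pow_atTop_nhds_zero_of_lt_one (Real.exp_nonneg _)
    (Real.exp_lt_one_iff.2 (by linarith))

lemma G_tendsto (hK : Integrable K mu2) :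
    Tendsto (fun n : ℕ => ∫ t, Real.exp (-((n:ℝ) * t)) * ‖K t‖ ∂mu2) atTop (𝓝 0) := by
  have h := tendsto_integral_of_dominated_convergence (μ := mu2)
    (F := fun (n : ℕ) t => Real.exp (-((n:ℝ) * t)) * ‖K t‖) (f := fun _ => (0:ℝ))
    (bound := fun t => ‖K t‖)
    (fun n => ((Real.continuous_exp.comp (by fun_prop)).aestronglyMeasurable.mul
      hK.norm.aestronglyMeasurable))
    hK.norm ?_ ?_
  · simpa using h
  · intro n
    filter_upwards [mem_Ioc_ae] with t ht
    rw [Real.norm_eq_abs, abs_mul, abs_norm, abs_of_pos (Real.exp_pos _)]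
    have h1 : Real.exp (-((n:ℝ) * t)) ≤ 1 := by
      rw [← Real.exp_zero]
      apply Real.exp_le_exp.2
      have : (0:ℝ) ≤ (n:ℝ) * t := mul_nonneg (n.cast_nonneg) ht.1.le
      linarith
    nlinarith [norm_nonneg (K t)]
  · filter_upwards [mem_Ioc_ae] with t ht
    simpa using (exp_seq_tendsto ht.1).mul_const ‖K t‖

lemma zero_ineq {lam : ℂ} (h0 : Phi K lam = 0) :
    (1:ℝ) ≤ Real.exp (-(2 * Real.pi * lam.im))
      + ‖∫ t, Complex.exp (Complex.I * lam * t) * K t ∂mu2‖ := by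
  rw [phi_eq] at h0
  set J := ∫ t, Complex.exp (Complex.I * lam * t) * K t ∂mu2 with hJ
  have h1 : (1:ℂ) = Complex.exp (2 * Real.pi * Complex.I * lam) - Complex.I * J := by
    linear_combination h0
  calc (1:ℝ) = ‖(1:ℂ)‖ := by simp
    _ ≤ ‖Complex.exp (2 * Real.pi * Complex.I * lam)‖ + ‖Complex.I * J‖ := by
        rw [h1]; exact norm_sub_le _ _
    _ = Real.exp (-(2 * Real.pi * lam.im)) + ‖J‖ := by
        rw [norm_cexp_twopi, norm_mul, Complex.norm_I, one_mul]

lemma im_bound (hK : Integrable K mu2) (δ : ℝ) :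
    ∃ M : ℝ, δ ≤ M ∧ ∀ lam : ℂ, M ≤ lam.im → Phi K lam ≠ 0 := by
  have h2 : Tendsto (fun n : ℕ => Real.exp (-(2 * Real.pi * (n:ℝ)))) atTop (𝓝 0) := by
    have e : ∀ n : ℕ, Real.exp (-(2 * Real.pi * (n:ℝ)))
        = Real.exp (-((n:ℝ) * (2 * Real.pi))) := fun n => by ring_nf
    simp_rw [e]
    exact exp_seq_tendsto (by positivity)
  have h3 : ∀ᶠ n : ℕ in atTop,
      Real.exp (-(2 * Real.pi * (n:ℝ)))
        + (∫ t, Real.exp (-((n:ℝ) * t)) * ‖K t‖ ∂mu2) < 1 := by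
    have hadd := h2.add (G_tendsto hK)
    rw [add_zero] at hadd
    exact hadd.eventually (eventually_lt_nhds (by norm_num : (0:ℝ) < 1))
  have h4 : ∀ᶠ n : ℕ in atTop, δ ≤ (n:ℝ) :=
    tendsto_natCast_atTop_atTop.eventually_ge_atTop δ
  obtain ⟨n, hn1, hn2⟩ := (h3.and h4).exists
  refine ⟨n, hn2, ?_⟩
  intro lam him h0
  have hineq := zero_ineq h0
  have hJle : ‖∫ t, Complex.exp (Complex.I * lam * t) * K t ∂mu2‖
      ≤ ∫ t, Real.exp (-((n:ℝ) * t)) * ‖K t‖ ∂mu2 := by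
    apply norm_integral_le_of_norm_le
    · exact integrable_aux hK (by fun_prop) (C := 1)
        (fun t ht => by
          rw [abs_of_pos (Real.exp_pos _), ← Real.exp_zero]
          apply Real.exp_le_exp.2
          have : (0:ℝ) ≤ (n:ℝ) * t := mul_nonneg (n.cast_nonneg) ht.1.le
          linarith)
    · filter_upwards [mem_Ioc_ae] with t ht
      rw [norm_mul, norm_cexp]
      have h5 : Real.exp (-(lam.im * t)) ≤ Real.exp (-((n:ℝ) * t)) := by
        apply Real.exp_le_exp.2
        have := mul_le_mul_of_nonneg_right him ht.1.le
        linarith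
      exact mul_le_mul_of_nonneg_right h5 (norm_nonneg _)
  have hee : Real.exp (-(2 * Real.pi * lam.im)) ≤ Real.exp (-(2 * Real.pi * (n:ℝ))) := by
    apply Real.exp_le_exp.2
    have := mul_le_mul_of_nonneg_left him (by positivity : (0:ℝ) ≤ 2 * Real.pi)
    linarith
  linarith

lemma tendsto_cocompact_of_abs {x : ℕ → ℝ} (h : Tendsto (fun n => |x n|) atTop atTop) :
    Tendsto x atTop (cocompact ℝ) := by
  rw [Filter.hasBasis_cocompact.tendsto_right_iff]
  intro s hs
  obtain ⟨R, hR⟩ := isBounded_iff_forall_norm_le.1 hs.isBounded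
  filter_upwards [h.eventually_gt_atTop R] with n hn hmem
  have := hR _ hmem
  rw [Real.norm_eq_abs] at this
  linarith

lemma rl (g : ℝ → ℂ) (a : ℕ → ℝ) (ha : Tendsto (fun n => |a n|) atTop atTop) :
    Tendsto (fun n => ∫ t, Complex.exp (Complex.I * (a n) * t) * g t ∂mu2) atTop (𝓝 0) := by
  have hRL := Real.tendsto_integral_exp_smul_cocompact
    ((Set.Ioc (0:ℝ) (2 * Real.pi)).indicator g)
  have hw : Tendsto (fun n => -(a n / (2 * Real.pi))) atTop (cocompact ℝ) := by
    apply tendsto_cocompact_of_abs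
    have e : ∀ n, |(-(a n / (2 * Real.pi)))| = |a n| / (2 * Real.pi) := by
      intro n
      rw [abs_neg, abs_div, abs_of_pos (by positivity : (0:ℝ) < 2 * Real.pi)]
    simp_rw [e]
    exact ha.atTop_div_const (by positivity)
  have key := hRL.comp hw
  have he : ∀ n, (∫ v : ℝ, 𝐞 (-(v * (-(a n / (2 * Real.pi)))))
        • (Set.Ioc (0:ℝ) (2 * Real.pi)).indicator g v)
      = ∫ t, Complex.exp (Complex.I * (a n) * t) * g t ∂mu2 := by
    intro n
    rw [show (∫ t, Complex.exp (Complex.I * (a n) * t) * g t ∂mu2)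
        = ∫ v : ℝ, (Set.Ioc (0:ℝ) (2 * Real.pi)).indicator
            (fun t => Complex.exp (Complex.I * (a n) * t) * g t) v from
      (integral_indicator measurableSet_Ioc).symm]
    congr 1
    funext v
    rw [Circle.smul_def, Real.fourierChar_apply]
    by_cases hv : v ∈ Set.Ioc (0:ℝ) (2 * Real.pi)
    · rw [Set.indicator_of_mem hv, Set.indicator_of_mem hv]
      congr 1
      rw [show 2 * Real.pi * -(v * -(a n / (2 * Real.pi))) = a n * v from by
        field_simp]
      push_cast
      ring
    · rw [Set.indicator_of_notMem hv, Set.indicator_of_notMem hv, smul_zero]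
  exact key.congr he


lemma upper_finite (hK : Integrable K mu2) {δ : ℝ} (hδ : 0 < δ) :
    {lam : ℂ | Phi K lam = 0 ∧ δ ≤ lam.im}.Finite := by
  by_contra hfin
  have hinf : {lam : ℂ | Phi K lam = 0 ∧ δ ≤ lam.im}.Infinite := hfin
  set S := {lam : ℂ | Phi K lam = 0 ∧ δ ≤ lam.im} with hSdef
  obtain ⟨M, hMδ, hM⟩ := im_bound hK δ
  have hMI : Phi K ((M:ℂ) * Complex.I) ≠ 0 := by
    apply hM
    simp
  by_cases hb : IsBounded S
  · -- bounded case : accumulation point, identity theorem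
    have hane : AnalyticOnNhd ℂ (Phi K) Set.univ :=
      analyticOnNhd_univ_iff_differentiable.2 (differentiable_phi hK)
    set u : ℕ ↪ S := hinf.natEmbedding with hu
    have hmem : ∀ n : ℕ, ((u n : S) : ℂ) ∈ S := fun n => (u n).2
    obtain ⟨z0, _, φ, hφ, hconv⟩ :=
      tendsto_subseq_of_bounded hb (x := fun n => ((u n : S) : ℂ)) hmem
    have hinj : Function.Injective (fun n : ℕ => ((u (φ n) : S) : ℂ)) := by
      intro m k h
      exact hφ.injective (u.injective (Subtype.coe_injective h))
    have hne : ∀ᶠ n in atTop, ((u (φ n) : S) : ℂ) ≠ z0 := by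
      have hfin2 : {n : ℕ | ((u (φ n) : S) : ℂ) = z0}.Finite := by
        apply Set.Subsingleton.finite
        intro m hm k hk
        exact hinj (hm.trans hk.symm)
      obtain ⟨N, hN⟩ := hfin2.bddAbove
      filter_upwards [eventually_gt_atTop N] with n hn
      intro hcon
      exact absurd (hN hcon) (not_le.2 hn)
    have htend : Tendsto (fun n => ((u (φ n) : S) : ℂ)) atTop (𝓝[≠] z0) :=
      tendsto_nhdsWithin_iff.2 ⟨hconv, hne⟩
    have hfreq : ∃ᶠ z in 𝓝[≠] z0, Phi K z = 0 :=
      htend.frequently (Frequently.of_forall fun n => (hmem (φ n)).1)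
    have hzero := hane.eqOn_zero_of_preconnected_of_frequently_eq_zero
      isPreconnected_univ (Set.mem_univ z0) hfreq
    exact hMI (hzero (Set.mem_univ _))
  · -- unbounded case : Riemann-Lebesgue argument
    rw [isBounded_iff_forall_norm_le] at hb
    push_neg at hb
    have hchoice : ∀ n : ℕ, ∃ lam ∈ S, (n:ℝ) < ‖lam‖ := fun n => hb n
    choose u humem hunorm using hchoice
    have hzero : ∀ n, Phi K (u n) = 0 := fun n => (humem n).1
    have him1 : ∀ n, δ ≤ (u n).im := fun n => (humem n).2
    have him2 : ∀ n, (u n).im ≤ M := by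
      intro n
      by_contra h
      push_neg at h
      exact hM _ h.le (hzero n)
    obtain ⟨b, hbcl, φ, hφm, hbconv⟩ := tendsto_subseq_of_bounded (Metric.isBounded_Icc δ M)
      (x := fun n => (u n).im) (fun n => ⟨him1 n, him2 n⟩)
    rw [isClosed_Icc.closure_eq] at hbcl
    have hδb : δ ≤ b := hbcl.1
    set v : ℕ → ℂ := fun n => u (φ n) with hv
    -- the real parts tend to infinity in absolute value
    have hre : Tendsto (fun n => |(v n).re|) atTop atTop := by
      apply tendsto_atTop_mono (g := fun n => |(v n).re|) (f := fun n : ℕ => (n:ℝ) - M)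
      · intro n
        have h1 : ((φ n : ℕ):ℝ) < ‖v n‖ := hunorm (φ n)
        have h2 : (n:ℝ) ≤ ((φ n : ℕ):ℝ) := by exact_mod_cast hφm.le_apply
        have h3 : ‖v n‖ ≤ |(v n).re| + |(v n).im| := by
          simpa using Complex.norm_le_abs_re_add_abs_im (v n)
        have h4 : |(v n).im| ≤ M := abs_le.2 ⟨by linarith [him1 (φ n)], him2 (φ n)⟩
        linarith
      · exact tendsto_atTop_add_const_right atTop (-M) tendsto_natCast_atTop_atTop
    -- the fixed L¹ profile
    set g : ℝ → ℂ := fun t => ((Real.exp (-(b * t)) : ℝ) : ℂ) * K t with hg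
    -- Riemann-Lebesgue for the main term
    have hB : Tendsto (fun n => ∫ t, Complex.exp (Complex.I * ((v n).re : ℝ) * t) * g t ∂mu2)
        atTop (𝓝 0) := rl g (fun n => (v n).re) hre
    -- the error term
    have hD : Tendsto (fun n =>
        ∫ t, |Real.exp (-((v n).im * t)) - Real.exp (-(b * t))| * ‖K t‖ ∂mu2) atTop (𝓝 0) := by
      have h := tendsto_integral_of_dominated_convergence (μ := mu2)
        (F := fun (n : ℕ) t => |Real.exp (-((v n).im * t)) - Real.exp (-(b * t))| * ‖K t‖)
        (f := fun _ => (0:ℝ)) (bound := fun t => 2 * ‖K t‖)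
        (fun n => (((Real.continuous_exp.comp (by fun_prop)).sub
          (Real.continuous_exp.comp (by fun_prop))).abs.aestronglyMeasurable.mul
          hK.norm.aestronglyMeasurable))
        (hK.norm.const_mul 2) ?_ ?_
      · simpa using h
      · intro n
        filter_upwards [mem_Ioc_ae] with t ht
        rw [Real.norm_eq_abs, abs_mul, abs_norm, _root_.abs_abs]
        have e1 : Real.exp (-((v n).im * t)) ≤ 1 := by
          rw [← Real.exp_zero]
          apply Real.exp_le_exp.2
          nlinarith [him1 (φ n), ht.1, hδ]
        have e2 : Real.exp (-(b * t)) ≤ 1 := by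
          rw [← Real.exp_zero]
          apply Real.exp_le_exp.2
          nlinarith [ht.1]
        have e3 : |Real.exp (-((v n).im * t)) - Real.exp (-(b * t))| ≤ 2 := by
          rw [abs_le]
          constructor <;> nlinarith [Real.exp_pos (-((v n).im * t)), Real.exp_pos (-(b * t))]
        nlinarith [norm_nonneg (K t)]
      · filter_upwards [mem_Ioc_ae] with t ht
        have h1 : Tendsto (fun n => Real.exp (-((v n).im * t))) atTop
            (𝓝 (Real.exp (-(b * t)))) := by
          apply (Real.continuous_exp.continuousAt.tendsto).comp
          exact (hbconv.mul_const t).neg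
        have h2 := ((h1.sub_const (Real.exp (-(b * t)))).abs).mul_const ‖K t‖
        simpa using h2
    -- for each n, the zero identity gives a lower bound
    have hkey : ∀ n, (1:ℝ) ≤ Real.exp (-(2 * Real.pi * δ))
        + (‖∫ t, Complex.exp (Complex.I * ((v n).re : ℝ) * t) * g t ∂mu2‖
          + ∫ t, |Real.exp (-((v n).im * t)) - Real.exp (-(b * t))| * ‖K t‖ ∂mu2) := by
      intro n
      have h0 := zero_ineq (K := K) (lam := v n) (hzero (φ n))
      have hsplit : ‖∫ t, Complex.exp (Complex.I * (v n) * t) * K t ∂mu2‖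
          ≤ ‖∫ t, Complex.exp (Complex.I * ((v n).re : ℝ) * t) * g t ∂mu2‖
            + ∫ t, |Real.exp (-((v n).im * t)) - Real.exp (-(b * t))| * ‖K t‖ ∂mu2 := by
        have hint1 := integrable_cexp_mul hK (v n)
        have hint2 : Integrable
            (fun t : ℝ => Complex.exp (Complex.I * ((v n).re : ℝ) * t) * g t) mu2 := by
          have := integrable_cexp_mul (K := g) ?_ (((v n).re : ℝ) : ℂ)
          · exact this
          · -- g integrable
            refine hK.norm.mono' ((Complex.continuous_ofReal.comp
              (Real.continuous_exp.comp (by fun_prop))).aestronglyMeasurable.mul hK.1) ?_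
            filter_upwards [mem_Ioc_ae] with t ht
            rw [norm_mul, Complex.norm_real, Real.norm_eq_abs, abs_of_pos (Real.exp_pos _)]
            have : Real.exp (-(b * t)) ≤ 1 := by
              rw [← Real.exp_zero]
              apply Real.exp_le_exp.2
              nlinarith [ht.1]
            nlinarith [norm_nonneg (K t)]
        have hdiff : ‖(∫ t, Complex.exp (Complex.I * (v n) * t) * K t ∂mu2)
            - ∫ t, Complex.exp (Complex.I * ((v n).re : ℝ) * t) * g t ∂mu2‖
            ≤ ∫ t, |Real.exp (-((v n).im * t)) - Real.exp (-(b * t))| * ‖K t‖ ∂mu2 := by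
          rw [← integral_sub hint1 hint2]
          apply norm_integral_le_of_norm_le
          · exact integrable_aux hK (by fun_prop) (C := 2)
              (fun t ht => by
                rw [_root_.abs_abs]
                have e1 : Real.exp (-((v n).im * t)) ≤ 1 := by
                  rw [← Real.exp_zero]
                  apply Real.exp_le_exp.2
                  nlinarith [him1 (φ n), ht.1, hδ]
                have e2 : Real.exp (-(b * t)) ≤ 1 := by
                  rw [← Real.exp_zero]
                  apply Real.exp_le_exp.2
                  nlinarith [ht.1]
                rw [abs_le]
                constructor <;>
                  nlinarith [Real.exp_pos (-((v n).im * t)), Real.exp_pos (-(b * t))])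
          · filter_upwards with t
            have efact : Complex.exp (Complex.I * (v n) * t)
                = Complex.exp (Complex.I * ((v n).re : ℝ) * t)
                  * ((Real.exp (-((v n).im * t)) : ℝ) : ℂ) := by
              rw [Complex.ofReal_exp, ← Complex.exp_add]
              have hvn : (v n) = ((v n).re : ℂ) + ((v n).im : ℂ) * Complex.I :=
                (Complex.re_add_im (v n)).symm
              congr 1
              nth_rewrite 1 [hvn]
              push_cast
              linear_combination (((v n).im : ℂ) * (t:ℂ)) * Complex.I_sq
            rw [efact]
            have : Complex.exp (Complex.I * ((v n).re : ℝ) * t)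
                  * ((Real.exp (-((v n).im * t)) : ℝ) : ℂ) * K t
                - Complex.exp (Complex.I * ((v n).re : ℝ) * t) * g t
                = Complex.exp (Complex.I * ((v n).re : ℝ) * t)
                  * (((Real.exp (-((v n).im * t)) : ℝ) : ℂ)
                    - ((Real.exp (-(b * t)) : ℝ) : ℂ)) * K t := by
              rw [hg]
              ring
            rw [this, norm_mul, norm_mul, norm_cexp]
            simp only [Complex.ofReal_im, neg_zero, zero_mul, Real.exp_zero, one_mul]
            rw [← Complex.ofReal_sub, Complex.norm_real, Real.norm_eq_abs]
        calc ‖∫ t, Complex.exp (Complex.I * (v n) * t) * K t ∂mu2‖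
            ≤ ‖∫ t, Complex.exp (Complex.I * ((v n).re : ℝ) * t) * g t ∂mu2‖
              + ‖(∫ t, Complex.exp (Complex.I * (v n) * t) * K t ∂mu2)
                - ∫ t, Complex.exp (Complex.I * ((v n).re : ℝ) * t) * g t ∂mu2‖ := by
              have := norm_add_le (∫ t, Complex.exp (Complex.I * ((v n).re : ℝ) * t) * g t ∂mu2)
                ((∫ t, Complex.exp (Complex.I * (v n) * t) * K t ∂mu2)
                  - ∫ t, Complex.exp (Complex.I * ((v n).re : ℝ) * t) * g t ∂mu2)
              simpa using this
          _ ≤ _ := by linarith [hdiff]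
      have hexp : Real.exp (-(2 * Real.pi * (v n).im)) ≤ Real.exp (-(2 * Real.pi * δ)) := by
        apply Real.exp_le_exp.2
        have := mul_le_mul_of_nonneg_left (him1 (φ n)) (by positivity : (0:ℝ) ≤ 2 * Real.pi)
        linarith
      linarith
    -- contradiction with the limits
    have hlim : Tendsto (fun n =>
        ‖∫ t, Complex.exp (Complex.I * ((v n).re : ℝ) * t) * g t ∂mu2‖
          + ∫ t, |Real.exp (-((v n).im * t)) - Real.exp (-(b * t))| * ‖K t‖ ∂mu2)
        atTop (𝓝 0) := by
      have := (hB.norm.add hD)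
      simpa using this
    have hδexp : Real.exp (-(2 * Real.pi * δ)) < 1 := by
      rw [← Real.exp_zero]
      apply Real.exp_lt_exp.2
      have : (0:ℝ) < 2 * Real.pi * δ := by positivity
      linarith
    obtain ⟨n, hn⟩ := (hlim.eventually
      (eventually_lt_nhds (by linarith : (0:ℝ) < 1 - Real.exp (-(2 * Real.pi * δ))))).exists
    linarith [hkey n]


lemma phi_reflect (K : ℝ → ℂ) (lam : ℂ) :
    Phi (fun t => -K (2 * Real.pi - t)) (-lam)
      = -Complex.exp (-(2 * Real.pi * Complex.I * lam)) * Phi K lam := by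
  have hcv := intervalIntegral.integral_comp_sub_left (a := (0:ℝ)) (b := 2 * Real.pi)
    (fun s => Complex.exp (Complex.I * (-lam) * ((2 * Real.pi - s : ℝ) : ℂ)) * (-K s))
    (2 * Real.pi)
  simp only [sub_sub_cancel, sub_zero, sub_self] at hcv
  simp only [Phi]
  rw [hcv]
  have h4 : (∫ x in (0:ℝ)..(2 * Real.pi),
        Complex.exp (Complex.I * (-lam) * ((2 * Real.pi - x : ℝ) : ℂ)) * (-K x))
      = -(Complex.exp (-(2 * Real.pi * Complex.I * lam))
          * ∫ x in (0:ℝ)..(2 * Real.pi), Complex.exp (Complex.I * lam * x) * K x) := by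
    rw [← intervalIntegral.integral_const_mul, ← intervalIntegral.integral_neg]
    apply intervalIntegral.integral_congr
    intro x hx
    have harg : Complex.I * (-lam) * ((2 * Real.pi - x : ℝ) : ℂ)
        = -(2 * Real.pi * Complex.I * lam) + Complex.I * lam * x := by
      push_cast
      ring
    simp only [harg, Complex.exp_add]
    ring
  rw [h4]
  have h2 : Complex.exp (-(2 * Real.pi * Complex.I * lam))
      * Complex.exp (2 * Real.pi * Complex.I * lam) = 1 := by
    rw [← Complex.exp_add]
    simp
  have h1 : Complex.exp (2 * Real.pi * Complex.I * (-lam))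
      = Complex.exp (-(2 * Real.pi * Complex.I * lam)) := by
    congr 1
    ring
  rw [h1]
  linear_combination (-1 : ℂ) * h2

end PhiAux

theorem finitely_many_zeros_away_from_real_axis
    (K : ℝ → ℂ)
    (hK : MeasureTheory.MemLp K 2 (MeasureTheory.volume.restrict (Set.Ioo 0 (2 * Real.pi))))
    (δ : ℝ) (hδ : 0 < δ) :
    {lam : ℂ | Phi K lam = 0 ∧ δ ≤ |lam.im|}.Finite := by
  have h2pi : (0:ℝ) < 2 * Real.pi := by positivity
  have hKint : Integrable K PhiAux.mu2 := by
    have heq : volume.restrict (Set.Ioo (0:ℝ) (2 * Real.pi)) = PhiAux.mu2 :=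
      Measure.restrict_congr_set Ioo_ae_eq_Ioc
    haveI : IsFiniteMeasure (volume.restrict (Set.Ioo (0:ℝ) (2 * Real.pi))) :=
      ⟨by rw [Measure.restrict_apply_univ]; exact measure_Ioo_lt_top⟩
    have h := hK.integrable (by norm_num : (1:ℝ≥0∞) ≤ 2)
    rwa [heq] at h
  have hK'int : Integrable (fun t => -K (2 * Real.pi - t)) PhiAux.mu2 := by
    have h1 : IntervalIntegrable K volume 0 (2 * Real.pi) := by
      rw [intervalIntegrable_iff_integrableOn_Ioc_of_le h2pi.le]
      exact hKint
    have h2 := (h1.comp_sub_left (2 * Real.pi)).neg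
    rw [sub_zero, sub_self] at h2
    have h3 : IntervalIntegrable (fun x => -K (2 * Real.pi - x)) volume 0 (2 * Real.pi) :=
      h2.symm
    rw [intervalIntegrable_iff_integrableOn_Ioc_of_le h2pi.le] at h3
    exact h3
  have hUfin := PhiAux.upper_finite hKint hδ
  have hU'fin := PhiAux.upper_finite hK'int hδ
  have hsub : {lam : ℂ | Phi K lam = 0 ∧ δ ≤ |lam.im|}
      ⊆ {lam : ℂ | Phi K lam = 0 ∧ δ ≤ lam.im}
        ∪ (fun z : ℂ => -z) ⁻¹'
            {lam : ℂ | Phi (fun t => -K (2 * Real.pi - t)) lam = 0 ∧ δ ≤ lam.im} := by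
    rintro lam ⟨h0, habs⟩
    rcases le_abs.1 habs with h | h
    · exact Or.inl ⟨h0, h⟩
    · refine Or.inr ?_
      simp only [Set.mem_preimage, Set.mem_setOf_eq]
      constructor
      · rw [PhiAux.phi_reflect K lam, h0, mul_zero]
      · simpa using h
  exact Set.Finite.subset (hUfin.union (hU'fin.preimage neg_injective.injOn)) hsub
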